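/- Let (u_n) be a sequence in ℝ³ with every u_n nondegenerate, let (t_n) be a sequence of reals, and suppose u_{i,n} − t_n → +∞, u_{j,n} − t_n → a_j, u_{k,n} − t_n → a_k for some reals a_j, a_k, and θ_ki^j(u_n) → β with β ∈ (0, π). Then the sequence log A_ijk(u_n) − u_{i,n} − t_n converges; in particular there is a convergent sequence (C_n) with log A_ijk(u_n) = C_n + u_{i,n} + t_n. -/

import Mathlib

open Real Filter Topology

/-- Edge length of a decorated edge with inversive distance `I`, base radii `ra, rb`
and conformal factors `x, y`. -/
noncomputable def elen (I ra rb x y : ℝ) : ℝ :=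
  Real.sqrt ((Real.exp x * ra) ^ 2 + (Real.exp y * rb) ^ 2 +
    2 * I * (Real.exp x * ra) * (Real.exp y * rb))

/-- Inner angle of a Euclidean triangle opposite the side `lc`, adjacent to `la, lb`. -/
noncomputable def ang (la lb lc : ℝ) : ℝ :=
  Real.arccos ((la ^ 2 + lb ^ 2 - lc ^ 2) / (2 * la * lb))

/-- Signed distance of the edge center to the vertex with scaled radius `ra`. -/
noncomputable def dCen (I ra rb l : ℝ) : ℝ := (ra ^ 2 + I * ra * rb) / l

/-- Signed height `(d_ac - d_ab * cos th) / sin th`. -/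
noncomputable def hgt (dac dab th : ℝ) : ℝ := (dac - dab * Real.cos th) / Real.sin th

/-- Strict triangle inequalities for three side lengths. -/
def Nondeg (a b c : ℝ) : Prop := a < b + c ∧ b < c + a ∧ c < a + b

noncomputable def Lij (ri rj rk Iij Ijk Iki ui uj uk : ℝ) : ℝ := elen Iij ri rj ui uj
noncomputable def Ljk (ri rj rk Iij Ijk Iki ui uj uk : ℝ) : ℝ := elen Ijk rj rk uj uk
noncomputable def Lki (ri rj rk Iij Ijk Iki ui uj uk : ℝ) : ℝ := elen Iki rk ri uk ui

/-- Inner angle `θ_jk^i` at vertex `i`. -/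
noncomputable def ThI (ri rj rk Iij Ijk Iki ui uj uk : ℝ) : ℝ :=
  ang (Lij ri rj rk Iij Ijk Iki ui uj uk) (Lki ri rj rk Iij Ijk Iki ui uj uk)
    (Ljk ri rj rk Iij Ijk Iki ui uj uk)

/-- Inner angle `θ_ki^j` at vertex `j`. -/
noncomputable def ThJ (ri rj rk Iij Ijk Iki ui uj uk : ℝ) : ℝ :=
  ang (Lij ri rj rk Iij Ijk Iki ui uj uk) (Ljk ri rj rk Iij Ijk Iki ui uj uk)
    (Lki ri rj rk Iij Ijk Iki ui uj uk)

/-- Inner angle `θ_ij^k` at vertex `k`. -/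
noncomputable def ThK (ri rj rk Iij Ijk Iki ui uj uk : ℝ) : ℝ :=
  ang (Ljk ri rj rk Iij Ijk Iki ui uj uk) (Lki ri rj rk Iij Ijk Iki ui uj uk)
    (Lij ri rj rk Iij Ijk Iki ui uj uk)

noncomputable def Dij (ri rj rk Iij Ijk Iki ui uj uk : ℝ) : ℝ :=
  dCen Iij (Real.exp ui * ri) (Real.exp uj * rj) (Lij ri rj rk Iij Ijk Iki ui uj uk)
noncomputable def Dji (ri rj rk Iij Ijk Iki ui uj uk : ℝ) : ℝ :=
  dCen Iij (Real.exp uj * rj) (Real.exp ui * ri) (Lij ri rj rk Iij Ijk Iki ui uj uk)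
noncomputable def Djk (ri rj rk Iij Ijk Iki ui uj uk : ℝ) : ℝ :=
  dCen Ijk (Real.exp uj * rj) (Real.exp uk * rk) (Ljk ri rj rk Iij Ijk Iki ui uj uk)
noncomputable def Dkj (ri rj rk Iij Ijk Iki ui uj uk : ℝ) : ℝ :=
  dCen Ijk (Real.exp uk * rk) (Real.exp uj * rj) (Ljk ri rj rk Iij Ijk Iki ui uj uk)
noncomputable def Dki (ri rj rk Iij Ijk Iki ui uj uk : ℝ) : ℝ :=
  dCen Iki (Real.exp uk * rk) (Real.exp ui * ri) (Lki ri rj rk Iij Ijk Iki ui uj uk)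
noncomputable def Dik (ri rj rk Iij Ijk Iki ui uj uk : ℝ) : ℝ :=
  dCen Iki (Real.exp ui * ri) (Real.exp uk * rk) (Lki ri rj rk Iij Ijk Iki ui uj uk)

/-- The height `h_ij^k`. -/
noncomputable def Hijk (ri rj rk Iij Ijk Iki ui uj uk : ℝ) : ℝ :=
  hgt (Dik ri rj rk Iij Ijk Iki ui uj uk) (Dij ri rj rk Iij Ijk Iki ui uj uk)
    (ThI ri rj rk Iij Ijk Iki ui uj uk)

/-- The height `h_ik^j`. -/
noncomputable def Hikj (ri rj rk Iij Ijk Iki ui uj uk : ℝ) : ℝ :=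
  hgt (Dij ri rj rk Iij Ijk Iki ui uj uk) (Dik ri rj rk Iij Ijk Iki ui uj uk)
    (ThI ri rj rk Iij Ijk Iki ui uj uk)

/-- The height `h_jk^i`. -/
noncomputable def Hjki (ri rj rk Iij Ijk Iki ui uj uk : ℝ) : ℝ :=
  hgt (Dji ri rj rk Iij Ijk Iki ui uj uk) (Djk ri rj rk Iij Ijk Iki ui uj uk)
    (ThJ ri rj rk Iij Ijk Iki ui uj uk)

/-- The height `h_ki^j`. -/
noncomputable def Hkij (ri rj rk Iij Ijk Iki ui uj uk : ℝ) : ℝ :=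
  hgt (Dkj ri rj rk Iij Ijk Iki ui uj uk) (Dki ri rj rk Iij Ijk Iki ui uj uk)
    (ThK ri rj rk Iij Ijk Iki ui uj uk)

/-- The area `A_ijk = (1/2) l_ij l_jk sin θ_ki^j`. -/
noncomputable def Area (ri rj rk Iij Ijk Iki ui uj uk : ℝ) : ℝ :=
  (1 / 2) * Lij ri rj rk Iij Ijk Iki ui uj uk * Ljk ri rj rk Iij Ijk Iki ui uj uk *
    Real.sin (ThJ ri rj rk Iij Ijk Iki ui uj uk)

/-- Nondegeneracy of the decorated triangle at `u`. -/
def NondegT (ri rj rk Iij Ijk Iki ui uj uk : ℝ) : Prop :=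
  Nondeg (Lij ri rj rk Iij Ijk Iki ui uj uk) (Ljk ri rj rk Iij Ijk Iki ui uj uk)
    (Lki ri rj rk Iij Ijk Iki ui uj uk)


lemma elen_pos {I ra rb : ℝ} (x y : ℝ) (hI : 0 < I) (hra : 0 < ra) (hrb : 0 < rb) :
    0 < elen I ra rb x y := by
  unfold elen
  apply Real.sqrt_pos.2
  positivity

lemma elen_shift (I ra rb x y s : ℝ) :
    elen I ra rb (x + s) (y + s) = Real.exp s * elen I ra rb x y := by
  unfold elen
  rw [show (Real.exp (x + s) * ra) ^ 2 + (Real.exp (y + s) * rb) ^ 2 +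
      2 * I * (Real.exp (x + s) * ra) * (Real.exp (y + s) * rb)
      = Real.exp s ^ 2 * ((Real.exp x * ra) ^ 2 + (Real.exp y * rb) ^ 2 +
        2 * I * (Real.exp x * ra) * (Real.exp y * rb)) by
    rw [Real.exp_add, Real.exp_add]; ring]
  rw [Real.sqrt_mul (by positivity), Real.sqrt_sq (Real.exp_nonneg s)]

lemma continuous_elen (I ra rb : ℝ) :
    Continuous (fun p : ℝ × ℝ => elen I ra rb p.1 p.2) := by
  unfold elen
  fun_prop

/-- If `u_i,n - t_n → +∞`, `u_j,n - t_n` and `u_k,n - t_n` converge and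
`θ_ki^j → β ∈ (0, π)`, then `log A_ijk(u_n) - u_i,n - t_n` converges. -/
theorem log_area_asymptotics_divergent (ri rj rk Iij Ijk Iki : ℝ) (hri : 0 < ri) (hrj : 0 < rj) (hrk : 0 < rk)
    (hIij : 1 < Iij) (hIjk : 1 < Ijk) (hIki : 1 < Iki)
    (a b c t : ℕ → ℝ) (aj ak β : ℝ)
    (hnd : ∀ n, NondegT ri rj rk Iij Ijk Iki (a n) (b n) (c n))
    (ha : Tendsto (fun n => a n - t n) atTop atTop)
    (hb : Tendsto (fun n => b n - t n) atTop (𝓝 aj))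
    (hc : Tendsto (fun n => c n - t n) atTop (𝓝 ak))
    (hβ : β ∈ Set.Ioo (0:ℝ) π)
    (hθj : Tendsto (fun n => ThJ ri rj rk Iij Ijk Iki (a n) (b n) (c n)) atTop (𝓝 β)) :
    ∃ Lm : ℝ, Tendsto (fun n => Real.log (Area ri rj rk Iij Ijk Iki (a n) (b n) (c n)) - a n - t n)
      atTop (𝓝 Lm) := by
  
  set L2 : ℕ → ℝ := fun n => Lij ri rj rk Iij Ijk Iki (a n) (b n) (c n) with hL2
  set L3 : ℕ → ℝ := fun n => Ljk ri rj rk Iij Ijk Iki (a n) (b n) (c n) with hL3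
  set θ : ℕ → ℝ := fun n => ThJ ri rj rk Iij Ijk Iki (a n) (b n) (c n) with hθ
  have hIij0 : (0:ℝ) < Iij := lt_trans one_pos hIij
  have hIjk0 : (0:ℝ) < Ijk := lt_trans one_pos hIjk
  have hL2pos : ∀ n, 0 < L2 n := fun n => elen_pos _ _ hIij0 hri hrj
  have hL3pos : ∀ n, 0 < L3 n := fun n => elen_pos _ _ hIjk0 hrj hrk
  -- limit of sin θ
  have hsinβ : 0 < Real.sin β := Real.sin_pos_of_pos_of_lt_pi hβ.1 hβ.2
  have hsin : Tendsto (fun n => Real.sin (θ n)) atTop (𝓝 (Real.sin β)) :=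
    (Real.continuous_sin.tendsto β).comp hθj
  have hsinpos : ∀ᶠ n in atTop, 0 < Real.sin (θ n) :=
    hsin.eventually (eventually_gt_nhds hsinβ)
  -- log L2 - a n
  have hba : Tendsto (fun n => b n - a n) atTop atBot := by
    have : Tendsto (fun n => (b n - t n) + (-(a n - t n))) atTop atBot :=
      hb.add_atBot (tendsto_neg_atBot_iff.2 ha)
    refine this.congr (fun n => by ring)
  have hexp0 : Tendsto (fun n => Real.exp (b n - a n)) atTop (𝓝 0) :=
    Real.tendsto_exp_atBot.comp hba
  have hL2shift : ∀ n, L2 n = Real.exp (a n) * elen Iij ri rj 0 (b n - a n) := by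
    intro n
    have := elen_shift Iij ri rj 0 (b n - a n) (a n)
    simpa [hL2, Lij] using this
  have hE2 : Tendsto (fun n => elen Iij ri rj 0 (b n - a n)) atTop (𝓝 ri) := by
    have hc2 : Tendsto (fun e : ℝ => Real.sqrt ((Real.exp 0 * ri) ^ 2 + (e * rj) ^ 2 +
        2 * Iij * (Real.exp 0 * ri) * (e * rj))) (𝓝 0) (𝓝 ri) := by
      have hcont : Continuous (fun e : ℝ => Real.sqrt ((Real.exp 0 * ri) ^ 2 + (e * rj) ^ 2 +
          2 * Iij * (Real.exp 0 * ri) * (e * rj))) := by fun_prop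
      have := hcont.tendsto 0
      simpa [Real.sqrt_sq hri.le] using this
    have := hc2.comp hexp0
    simpa [elen, Function.comp_def] using this
  have h1 : Tendsto (fun n => Real.log (L2 n) - a n) atTop (𝓝 (Real.log ri)) := by
    have heq : ∀ n, Real.log (L2 n) - a n = Real.log (elen Iij ri rj 0 (b n - a n)) := by
      intro n
      rw [hL2shift n, Real.log_mul (Real.exp_ne_zero _)
        (ne_of_gt (elen_pos _ _ hIij0 hri hrj)), Real.log_exp]
      ring
    have : Tendsto (fun n => Real.log (elen Iij ri rj 0 (b n - a n))) atTop
        (𝓝 (Real.log ri)) :=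
      ((Real.continuousAt_log (ne_of_gt hri)).tendsto).comp hE2
    exact this.congr (fun n => (heq n).symm)
  -- log L3 - t n
  have hE0pos : 0 < elen Ijk rj rk aj ak := elen_pos _ _ hIjk0 hrj hrk
  have hE3 : Tendsto (fun n => elen Ijk rj rk (b n - t n) (c n - t n)) atTop
      (𝓝 (elen Ijk rj rk aj ak)) := by
    have := ((continuous_elen Ijk rj rk).tendsto (aj, ak)).comp (hb.prodMk_nhds hc)
    simpa [Function.comp_def] using this
  have hL3shift : ∀ n, L3 n = Real.exp (t n) * elen Ijk rj rk (b n - t n) (c n - t n) := by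
    intro n
    have := elen_shift Ijk rj rk (b n - t n) (c n - t n) (t n)
    simpa [hL3, Ljk] using this
  have h2 : Tendsto (fun n => Real.log (L3 n) - t n) atTop
      (𝓝 (Real.log (elen Ijk rj rk aj ak))) := by
    have heq : ∀ n, Real.log (L3 n) - t n
        = Real.log (elen Ijk rj rk (b n - t n) (c n - t n)) := by
      intro n
      rw [hL3shift n, Real.log_mul (Real.exp_ne_zero _)
        (ne_of_gt (elen_pos _ _ hIjk0 hrj hrk)), Real.log_exp]
      ring
    have : Tendsto (fun n => Real.log (elen Ijk rj rk (b n - t n) (c n - t n))) atTop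
        (𝓝 (Real.log (elen Ijk rj rk aj ak))) :=
      ((Real.continuousAt_log (ne_of_gt hE0pos)).tendsto).comp hE3
    exact this.congr (fun n => (heq n).symm)
  -- log sin θ
  have h3 : Tendsto (fun n => Real.log (Real.sin (θ n))) atTop (𝓝 (Real.log (Real.sin β))) :=
    ((Real.continuousAt_log (ne_of_gt hsinβ)).tendsto).comp hsin
  refine ⟨Real.log (1/2) + Real.log ri + Real.log (elen Ijk rj rk aj ak)
    + Real.log (Real.sin β), ?_⟩
  have hsum : Tendsto (fun n => Real.log (1/2) + (Real.log (L2 n) - a n)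
      + (Real.log (L3 n) - t n) + Real.log (Real.sin (θ n))) atTop
      (𝓝 (Real.log (1/2) + Real.log ri + Real.log (elen Ijk rj rk aj ak)
        + Real.log (Real.sin β))) :=
    ((tendsto_const_nhds.add h1).add h2).add h3
  refine hsum.congr' ?_
  filter_upwards [hsinpos] with n hsn
  have hA : Area ri rj rk Iij Ijk Iki (a n) (b n) (c n)
      = 1/2 * L2 n * L3 n * Real.sin (θ n) := rfl
  rw [hA, Real.log_mul (mul_pos (mul_pos (by norm_num : (0:ℝ) < 1/2) (hL2pos n)) (hL3pos n)).ne'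
      (ne_of_gt hsn),
    Real.log_mul (mul_pos (by norm_num : (0:ℝ) < 1/2) (hL2pos n)).ne' (ne_of_gt (hL3pos n)),
    Real.log_mul (by norm_num) (ne_of_gt (hL2pos n))]
  ring
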